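/- Let k_1,…,k_n be integers, let W = Σ_{i=1}^n k_i e_i ∈ ℤ^n, and set R_o = {i : k_i is odd}. Suppose Σ_{i=1}^n k_i² > 4n − 3|R_o|. Then for every x ∈ ℤ^n satisfying |2x_i − k_i| ≤ 2 for all i (i.e., every lattice point of a unit cube whose closed solid cube contains W/2), one has ⟨x, W − x⟩ > 0. -/
import Mathlib


open Finset

/-- The standard dot product on `ℤ^n`. -/
def dotZ {n : ℕ} (v w : Fin n → ℤ) : ℤ := ∑ i, v i * w i

theorem stmt_17 {n : ℕ} (k : Fin n → ℤ)
    (h : ∑ i, (k i) ^ 2 >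
      4 * (n : ℤ) - 3 * ((univ.filter fun i => Odd (k i)).card : ℤ))
    (x : Fin n → ℤ) (hx : ∀ i, |2 * x i - k i| ≤ 2) :
    0 < dotZ x (k - x) := by
  have key : ∀ i, (2 * x i - k i) ^ 2 ≤ if Odd (k i) then 1 else 4 := by
    intro i
    have h1 := hx i
    rw [abs_le] at h1
    by_cases hk : Odd (k i)
    · simp only [hk, if_true]
      obtain ⟨m, hm⟩ := hk
      have : 2 * x i - k i = 1 ∨ 2 * x i - k i = -1 := by omega
      rcases this with h' | h' <;> rw [h'] <;> norm_num
    · simp only [hk, if_false]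
      nlinarith [h1.1, h1.2]
  have hsum : ∑ i, (2 * x i - k i) ^ 2 ≤ ∑ i, if Odd (k i) then (1 : ℤ) else 4 :=
    Finset.sum_le_sum fun i _ => key i
  have hrhs : ∑ i, (if Odd (k i) then (1 : ℤ) else 4)
      = ((univ.filter fun i => Odd (k i)).card : ℤ) * 1
        + ((univ.filter fun i => ¬ Odd (k i)).card : ℤ) * 4 := by
    rw [Finset.sum_ite]
    simp [mul_comm]
  have hcard : (univ.filter fun i => ¬ Odd (k i)).card
      = n - (univ.filter fun i => Odd (k i)).card := by
    rw [Finset.filter_not, Finset.card_sdiff_of_subset (Finset.filter_subset _ _), Finset.card_univ,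
      Fintype.card_fin]
  have hle : (univ.filter fun i => Odd (k i)).card ≤ n := by
    simpa using Finset.card_filter_le univ fun i => Odd (k i)
  have hcardZ : ((univ.filter fun i => ¬ Odd (k i)).card : ℤ)
      = (n : ℤ) - ((univ.filter fun i => Odd (k i)).card : ℤ) := by
    rw [hcard]; push_cast [hle]; ring
  have expand : 4 * dotZ x (k - x) = ∑ i, ((k i) ^ 2 - (2 * x i - k i) ^ 2) := by
    unfold dotZ
    rw [Finset.mul_sum]
    apply Finset.sum_congr rfl
    intro i _
    simp only [Pi.sub_apply]
    ring
  have hpos : 0 < 4 * dotZ x (k - x) := by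
    rw [expand, Finset.sum_sub_distrib]
    have h2 : ∑ i, (2 * x i - k i) ^ 2
        ≤ 4 * (n : ℤ) - 3 * ((univ.filter fun i => Odd (k i)).card : ℤ) := by
      rw [hrhs, hcardZ] at hsum
      linarith
    linarith
  linarith
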